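/- Assume good X and good X'. Then the following three statements are equivalent: (1) Abs xs x X = Abs xs' x' X'; (2) xs = xs' and there exists y ∉ {x,x'} with fresh xs y X, fresh xs y X' and X[y ∧ x]_xs = X'[y ∧ x']_xs; (3) xs = xs' and for all y ∉ {x,x'}, if fresh xs y X and fresh xs y X' then X[y ∧ x]_xs = X'[y ∧ x']_xs. -/

import Mathlib

open scoped Classical

universe u

section Binding

variable (var varsort index bindex opsym : Type u)

/-! ### Inputs -/

/-- An `(α,β)`-input: a partial function from `α` to `β`. -/
abbrev Input (α β : Type u) : Type u := α → Option β

/-- The domain of an input. -/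
def idom {α β : Type u} (inp : Input α β) : Set α := {a | inp a ≠ none}

/-- The componentwise lifting of a predicate to inputs. -/
def liftP {α β : Type u} (P : β → Prop) (inp : Input α β) : Prop :=
  ∀ a b, inp a = some b → P b

/-- The componentwise lifting of a function to inputs. -/
def liftF {α β γ : Type u} (f : β → γ) (inp : Input α β) : Input α γ :=
  fun a => (inp a).map f

/-- An input is small if its domain has cardinality smaller than that of `var`. -/
def smallDom {α β : Type u} (inp : Input α β) : Prop :=
  Cardinal.mk (idom inp) < Cardinal.mk var

/-! ### Quasiterms -/

mutual
/-- Quasiterms: raw terms before quotienting by alpha-equivalence. -/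
inductive QTerm : Type u where
  | qVar : varsort → var → QTerm
  | qOp : opsym → (index → Option QTerm) → (bindex → Option QAbs) → QTerm
/-- Quasiabstractions. -/
inductive QAbs : Type u where
  | qAbs : varsort → var → QTerm → QAbs
end

/-- Transposition of two variables. -/
noncomputable def swapVar (z1 z2 x : var) : var :=
  if x = z1 then z2 else if x = z2 then z1 else x

/-- Sort-aware transposition of variables (acts only on variables of varsort `zs`). -/
noncomputable def swapVarS (zs xs : varsort) (z1 z2 x : var) : var :=
  if xs = zs then swapVar var z1 z2 x else x

variable {var varsort index bindex opsym}

/-- Swapping of the variables `z1`, `z2` at varsort `zs` in a quasiterm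
(transposing them everywhere, including binding positions). -/
noncomputable def qSwap (z1 z2 : var) (zs : varsort) :
    QTerm var varsort index bindex opsym → QTerm var varsort index bindex opsym :=
  QTerm.rec (motive_1 := fun _ => QTerm var varsort index bindex opsym)
    (motive_2 := fun _ => QAbs var varsort index bindex opsym)
    (motive_3 := fun _ => Option (QTerm var varsort index bindex opsym))
    (motive_4 := fun _ => Option (QAbs var varsort index bindex opsym))
    (fun xs x => .qVar xs (swapVarS var varsort zs xs z1 z2 x))
    (fun d _ _ rinp rbinp => .qOp d rinp rbinp)
    (fun xs x _ rX => .qAbs xs (swapVarS var varsort zs xs z1 z2 x) rX)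
    none (fun _ r => some r) none (fun _ r => some r)

/-- Swapping of variables in a quasiabstraction. -/
noncomputable def qSwapAbs (z1 z2 : var) (zs : varsort) :
    QAbs var varsort index bindex opsym → QAbs var varsort index bindex opsym
  | .qAbs xs x X => .qAbs xs (swapVarS var varsort zs xs z1 z2 x) (qSwap z1 z2 zs X)

/-! ### Freshness and goodness -/

mutual
/-- `QFresh ys y X`: the variable `y` of varsort `ys` has no free occurrence in `X`. -/
inductive QFresh : varsort → var → QTerm var varsort index bindex opsym → Prop where
  | qVar : ∀ {ys y xs x}, (ys, y) ≠ (xs, x) → QFresh ys y (.qVar xs x)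
  | qOp : ∀ {ys y d inp binp}, (∀ i X, inp i = some X → QFresh ys y X) →
      (∀ j A, binp j = some A → QFreshAbs ys y A) → QFresh ys y (.qOp d inp binp)
/-- Freshness for quasiabstractions. -/
inductive QFreshAbs : varsort → var → QAbs var varsort index bindex opsym → Prop where
  | qAbs_bound : ∀ {xs x X}, QFreshAbs xs x (.qAbs xs x X)
  | qAbs_body : ∀ {ys y xs x X}, QFresh ys y X → QFreshAbs ys y (.qAbs xs x X)
end

mutual
/-- Good quasiterms: all constructors branch less than `|var|`. -/
inductive QGood : QTerm var varsort index bindex opsym → Prop where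
  | qVar : ∀ {xs x}, QGood (.qVar xs x)
  | qOp : ∀ {d inp binp}, (∀ i X, inp i = some X → QGood X) →
      (∀ j A, binp j = some A → QGoodAbs A) →
      smallDom var inp → smallDom var binp → QGood (.qOp d inp binp)
/-- Good quasiabstractions. -/
inductive QGoodAbs : QAbs var varsort index bindex opsym → Prop where
  | qAbs : ∀ {xs x X}, QGood X → QGoodAbs (.qAbs xs x X)
end

/-! ### Alpha-equivalence -/

mutual
/-- Alpha-equivalence of quasiterms. -/
inductive Alpha : QTerm var varsort index bindex opsym →
    QTerm var varsort index bindex opsym → Prop where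
  | qVar : ∀ {xs x}, Alpha (.qVar xs x) (.qVar xs x)
  | qOp : ∀ {d inp binp inp' binp'},
      (∀ i, inp i = none ↔ inp' i = none) →
      (∀ i X X', inp i = some X → inp' i = some X' → Alpha X X') →
      (∀ j, binp j = none ↔ binp' j = none) →
      (∀ j A A', binp j = some A → binp' j = some A' → AlphaAbs A A') →
      Alpha (.qOp d inp binp) (.qOp d inp' binp')
/-- Alpha-equivalence of quasiabstractions (the exists-fresh formulation). -/
inductive AlphaAbs : QAbs var varsort index bindex opsym →
    QAbs var varsort index bindex opsym → Prop where
  | qAbs : ∀ {xs x x' X X' y}, y ∉ ({x, x'} : Set var) →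
      QFresh xs y X → QFresh xs y X' →
      Alpha (qSwap y x xs X) (qSwap y x' xs X') →
      AlphaAbs (.qAbs xs x X) (.qAbs xs x' X')
end

/-! ### Terms and abstractions as quotients -/

variable (var varsort index bindex opsym)

/-- Terms: quasiterms modulo alpha-equivalence. -/
def Term : Type u := Quot (@Alpha var varsort index bindex opsym)

/-- Abstractions: quasiabstractions modulo alpha-equivalence. -/
def Abstr : Type u := Quot (@AlphaAbs var varsort index bindex opsym)

variable {var varsort index bindex opsym}

/-- The projection from quasiterms to terms. -/
def tmk : QTerm var varsort index bindex opsym → Term var varsort index bindex opsym :=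
  Quot.mk _

/-- The projection from quasiabstractions to abstractions. -/
def amk : QAbs var varsort index bindex opsym → Abstr var varsort index bindex opsym :=
  Quot.mk _

/-- A representative of a term. -/
noncomputable def trep (X : Term var varsort index bindex opsym) :
    QTerm var varsort index bindex opsym := Quot.out X

/-- A representative of an abstraction. -/
noncomputable def arep (A : Abstr var varsort index bindex opsym) :
    QAbs var varsort index bindex opsym := Quot.out A

/-- Good terms. -/
def good (X : Term var varsort index bindex opsym) : Prop := QGood (trep X)

/-- Good abstractions. -/
def goodAbs (A : Abstr var varsort index bindex opsym) : Prop := QGoodAbs (arep A)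

/-- The variable-injection constructor on terms. -/
def Var (xs : varsort) (x : var) : Term var varsort index bindex opsym :=
  tmk (.qVar xs x)

/-- The operation constructor on terms. -/
noncomputable def Op (d : opsym) (inp : Input index (Term var varsort index bindex opsym))
    (binp : Input bindex (Abstr var varsort index bindex opsym)) :
    Term var varsort index bindex opsym :=
  tmk (.qOp d (liftF trep inp) (liftF arep binp))

/-- The abstraction constructor. -/
noncomputable def Abs (xs : varsort) (x : var) (X : Term var varsort index bindex opsym) :
    Abstr var varsort index bindex opsym :=
  amk (.qAbs xs x (trep X))

/-- Freshness on terms. -/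
def fresh (ys : varsort) (y : var) (X : Term var varsort index bindex opsym) : Prop :=
  QFresh ys y (trep X)

/-- Freshness on abstractions. -/
def freshAbs (ys : varsort) (y : var) (A : Abstr var varsort index bindex opsym) : Prop :=
  QFreshAbs ys y (arep A)

/-- Swapping on terms. -/
noncomputable def tswap (X : Term var varsort index bindex opsym)
    (z1 z2 : var) (zs : varsort) : Term var varsort index bindex opsym :=
  tmk (qSwap z1 z2 zs (trep X))

/-! ### Substitution -/

mutual
/-- The graph of capture-avoiding substitution on quasiterms:
`QSubst X Y y ys Z` means that `Z` is a result of substituting `Y` for the free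
occurrences of the variable `y` of varsort `ys` in `X` (along a capture-free
representative). -/
inductive QSubst : QTerm var varsort index bindex opsym →
    QTerm var varsort index bindex opsym → var → varsort →
    QTerm var varsort index bindex opsym → Prop where
  | var_eq : ∀ {Y y ys}, QSubst (.qVar ys y) Y y ys Y
  | var_ne : ∀ {Y y ys xs x}, (xs, x) ≠ (ys, y) → QSubst (.qVar xs x) Y y ys (.qVar xs x)
  | op : ∀ {Y y ys d inp binp inp' binp'},
      (∀ i, inp i = none ↔ inp' i = none) →
      (∀ i X X', inp i = some X → inp' i = some X' → QSubst X Y y ys X') →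
      (∀ j, binp j = none ↔ binp' j = none) →
      (∀ j A A', binp j = some A → binp' j = some A' → QSubstAbs A Y y ys A') →
      QSubst (.qOp d inp binp) Y y ys (.qOp d inp' binp')
/-- The graph of capture-avoiding substitution on quasiabstractions. -/
inductive QSubstAbs : QAbs var varsort index bindex opsym →
    QTerm var varsort index bindex opsym → var → varsort →
    QAbs var varsort index bindex opsym → Prop where
  | abs : ∀ {Y y ys xs x X X'}, (xs, x) ≠ (ys, y) → QFresh xs x Y →
      QSubst X Y y ys X' → QSubstAbs (.qAbs xs x X) Y y ys (.qAbs xs x X')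
end

/-- The graph of capture-avoiding substitution on terms. -/
def SubstRel (X Y : Term var varsort index bindex opsym) (y : var) (ys : varsort)
    (Z : Term var varsort index bindex opsym) : Prop :=
  ∃ qX qZ, tmk qX = X ∧ tmk qZ = Z ∧ QSubst qX (trep Y) y ys qZ

/-- Capture-avoiding substitution on terms: `subst X Y y ys` is `X[Y/y]_ys`. -/
noncomputable def subst (X Y : Term var varsort index bindex opsym)
    (y : var) (ys : varsort) : Term var varsort index bindex opsym :=
  if h : ∃ Z, SubstRel X Y y ys Z then h.choose else X

/-- The graph of capture-avoiding substitution on abstractions. -/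
def SubstAbsRel (A : Abstr var varsort index bindex opsym)
    (Y : Term var varsort index bindex opsym) (y : var) (ys : varsort)
    (B : Abstr var varsort index bindex opsym) : Prop :=
  ∃ qA qB, amk qA = A ∧ amk qB = B ∧ QSubstAbs qA (trep Y) y ys qB

/-- Capture-avoiding substitution on abstractions: `substAbs A Y y ys` is `A[Y/y]_ys`. -/
noncomputable def substAbs (A : Abstr var varsort index bindex opsym)
    (Y : Term var varsort index bindex opsym) (y : var) (ys : varsort) :
    Abstr var varsort index bindex opsym :=
  if h : ∃ B, SubstAbsRel A Y y ys B then h.choose else A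

/-! ### Parallel substitution -/

mutual
/-- The graph of capture-avoiding parallel substitution on quasiterms, along an
assignment `ρ : varsort → var → Option qterm`. -/
inductive QPSubst : QTerm var varsort index bindex opsym →
    (varsort → var → Option (QTerm var varsort index bindex opsym)) →
    QTerm var varsort index bindex opsym → Prop where
  | var_some : ∀ {ρ xs x Y}, ρ xs x = some Y → QPSubst (.qVar xs x) ρ Y
  | var_none : ∀ {ρ xs x}, ρ xs x = none → QPSubst (.qVar xs x) ρ (.qVar xs x)
  | op : ∀ {ρ d inp binp inp' binp'},
      (∀ i, inp i = none ↔ inp' i = none) →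
      (∀ i X X', inp i = some X → inp' i = some X' → QPSubst X ρ X') →
      (∀ j, binp j = none ↔ binp' j = none) →
      (∀ j A A', binp j = some A → binp' j = some A' → QPSubstAbs A ρ A') →
      QPSubst (.qOp d inp binp) ρ (.qOp d inp' binp')
/-- The graph of capture-avoiding parallel substitution on quasiabstractions. -/
inductive QPSubstAbs : QAbs var varsort index bindex opsym →
    (varsort → var → Option (QTerm var varsort index bindex opsym)) →
    QAbs var varsort index bindex opsym → Prop where
  | abs : ∀ {ρ xs x X X'}, ρ xs x = none →
      (∀ ys y Y, ρ ys y = some Y → QFresh xs x Y) →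
      QPSubst X ρ X' → QPSubstAbs (.qAbs xs x X) ρ (.qAbs xs x X')
end

/-- Turning a term-valued assignment into a quasiterm-valued one, by picking
representatives. -/
noncomputable def qassign (ρ : varsort → var → Option (Term var varsort index bindex opsym)) :
    varsort → var → Option (QTerm var varsort index bindex opsym) :=
  fun xs x => (ρ xs x).map trep

/-- The graph of parallel substitution on terms. -/
def PSubstRel (X : Term var varsort index bindex opsym)
    (ρ : varsort → var → Option (Term var varsort index bindex opsym))
    (Z : Term var varsort index bindex opsym) : Prop :=
  ∃ qX qZ, tmk qX = X ∧ tmk qZ = Z ∧ QPSubst qX (qassign ρ) qZ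

/-- Capture-avoiding parallel substitution on terms: `psubst X ρ` is `X[ρ]`. -/
noncomputable def psubst (X : Term var varsort index bindex opsym)
    (ρ : varsort → var → Option (Term var varsort index bindex opsym)) :
    Term var varsort index bindex opsym :=
  if h : ∃ Z, PSubstRel X ρ Z then h.choose else X

/-- The graph of parallel substitution on abstractions. -/
def PSubstAbsRel (A : Abstr var varsort index bindex opsym)
    (ρ : varsort → var → Option (Term var varsort index bindex opsym))
    (B : Abstr var varsort index bindex opsym) : Prop :=
  ∃ qA qB, amk qA = A ∧ amk qB = B ∧ QPSubstAbs qA (qassign ρ) qB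

/-- Capture-avoiding parallel substitution on abstractions. -/
noncomputable def psubstAbs (A : Abstr var varsort index bindex opsym)
    (ρ : varsort → var → Option (Term var varsort index bindex opsym)) :
    Abstr var varsort index bindex opsym :=
  if h : ∃ B, PSubstAbsRel A ρ B then h.choose else A

variable {var varsort index bindex opsym : Type u}

/-- Mutual induction principle for quasiterms. -/
theorem QTerm.my_ind {P : QTerm var varsort index bindex opsym → Prop}
    {Q : QAbs var varsort index bindex opsym → Prop}
    (hvar : ∀ xs x, P (.qVar xs x))
    (hop : ∀ d inp binp, (∀ i X, inp i = some X → P X) →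
      (∀ j A, binp j = some A → Q A) → P (.qOp d inp binp))
    (habs : ∀ xs x X, P X → Q (.qAbs xs x X)) :
    (∀ X, P X) ∧ (∀ A, Q A) := by
  refine ⟨fun X => ?_, fun A => ?_⟩
  · exact QTerm.rec (motive_1 := P) (motive_2 := Q)
      (motive_3 := fun o => ∀ X, o = some X → P X)
      (motive_4 := fun o => ∀ A, o = some A → Q A)
      hvar (fun d inp binp h1 h2 => hop d inp binp h1 h2)
      (fun xs x X hX => habs xs x X hX)
      (fun X h => by cases h)
      (fun X hX Y h => by cases h; exact hX)
      (fun A h => by cases h)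
      (fun A hA B h => by cases h; exact hA) X
  · exact QAbs.rec (motive_1 := P) (motive_2 := Q)
      (motive_3 := fun o => ∀ X, o = some X → P X)
      (motive_4 := fun o => ∀ A, o = some A → Q A)
      hvar (fun d inp binp h1 h2 => hop d inp binp h1 h2)
      (fun xs x X hX => habs xs x X hX)
      (fun X h => by cases h)
      (fun X hX Y h => by cases h; exact hX)
      (fun A h => by cases h)
      (fun A hA B h => by cases h; exact hA) A

@[simp] theorem qSwap_qVar (z1 z2 : var) (zs xs : varsort) (x : var) :
    qSwap (index := index) (bindex := bindex) (opsym := opsym) z1 z2 zs (.qVar xs x)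
      = .qVar xs (swapVarS var varsort zs xs z1 z2 x) := rfl

@[simp] theorem qSwap_qOp (z1 z2 : var) (zs : varsort) (d : opsym)
    (inp : index → Option (QTerm var varsort index bindex opsym))
    (binp : bindex → Option (QAbs var varsort index bindex opsym)) :
    qSwap z1 z2 zs (.qOp d inp binp)
      = .qOp d (fun i => (inp i).map (qSwap z1 z2 zs))
          (fun j => (binp j).map (qSwapAbs z1 z2 zs)) := by
  show QTerm.qOp d _ _ = _
  congr 1
  · funext i; cases h : inp i with
    | none => simp [h, qSwap]
    | some X => simp [h, qSwap]
  · funext j; cases h : binp j with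
    | none => simp [h, qSwap]
    | some A => cases A; simp [h, qSwap, qSwapAbs]

@[simp] theorem qSwapAbs_qAbs (z1 z2 : var) (zs xs : varsort) (x : var)
    (X : QTerm var varsort index bindex opsym) :
    qSwapAbs z1 z2 zs (.qAbs xs x X)
      = .qAbs xs (swapVarS var varsort zs xs z1 z2 x) (qSwap z1 z2 zs X) := rfl
theorem swapVar_invol (a b x : var) : swapVar var a b (swapVar var a b x) = x := by
  unfold swapVar; split_ifs <;> simp_all

theorem swapVar_comm (a b x : var) : swapVar var a b x = swapVar var b a x := by
  unfold swapVar; split_ifs <;> simp_all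

theorem swapVar_same (a x : var) : swapVar var a a x = x := by
  unfold swapVar; split_ifs <;> simp_all

theorem swapVar_conj (a b c d v : var) :
    swapVar var a b (swapVar var c d v)
      = swapVar var (swapVar var a b c) (swapVar var a b d) (swapVar var a b v) := by
  unfold swapVar; split_ifs <;> simp_all

theorem swapVarS_invol (zs xs : varsort) (a b x : var) :
    swapVarS var varsort zs xs a b (swapVarS var varsort zs xs a b x) = x := by
  unfold swapVarS; split_ifs <;> simp [swapVar_invol]

theorem swapVarS_inj (zs xs : varsort) (a b : var) {x y : var}
    (h : swapVarS var varsort zs xs a b x = swapVarS var varsort zs xs a b y) : x = y := by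
  have := congrArg (swapVarS var varsort zs xs a b) h
  rwa [swapVarS_invol, swapVarS_invol] at this

theorem swapVarS_comm (zs xs : varsort) (a b x : var) :
    swapVarS var varsort zs xs a b x = swapVarS var varsort zs xs b a x := by
  unfold swapVarS; split_ifs <;> simp [swapVar_comm]

theorem swapVarS_same (zs xs : varsort) (a x : var) :
    swapVarS var varsort zs xs a a x = x := by
  unfold swapVarS; split_ifs <;> simp [swapVar_same]

theorem swapVarS_id (zs xs : varsort) (a b x : var) (h1 : x ≠ a) (h2 : x ≠ b) :
    swapVarS var varsort zs xs a b x = x := by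
  unfold swapVarS swapVar; split_ifs <;> simp_all

theorem swapVarS_conj (zs zs' xs : varsort) (a b c d v : var) :
    swapVarS var varsort zs xs a b (swapVarS var varsort zs' xs c d v)
      = swapVarS var varsort zs' xs (swapVarS var varsort zs zs' a b c)
          (swapVarS var varsort zs zs' a b d) (swapVarS var varsort zs xs a b v) := by
  unfold swapVarS
  by_cases h1 : xs = zs <;> by_cases h2 : xs = zs'
  · have h3 : zs' = zs := by rw [← h1, ← h2]
    simp only [if_pos h1, if_pos h2, if_pos h3]
    exact swapVar_conj a b c d v
  · have h3 : ¬ zs' = zs := fun h => h2 (h1.trans h.symm)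
    simp only [if_pos h1, if_neg h2, if_neg h3]
  · have h3 : ¬ zs' = zs := fun h => h1 (h2.trans h)
    simp only [if_neg h1, if_pos h2, if_neg h3]
  · simp only [if_neg h1, if_neg h2]
theorem qSwap_invol_pair :
    (∀ X : QTerm var varsort index bindex opsym,
      ∀ a b zs, qSwap a b zs (qSwap a b zs X) = X) ∧
    (∀ A : QAbs var varsort index bindex opsym,
      ∀ a b zs, qSwapAbs a b zs (qSwapAbs a b zs A) = A) := by
  apply QTerm.my_ind
  · intro xs x a b zs; simp [swapVarS_invol]
  · intro d inp binp h1 h2 a b zs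
    simp only [qSwap_qOp]
    congr 1
    · funext i; cases h : inp i with
      | none => simp
      | some X => simp [h1 i X h]
    · funext j; cases h : binp j with
      | none => simp
      | some A => simp [h2 j A h]
  · intro xs x X hX a b zs; simp [swapVarS_invol, hX]

theorem qSwap_invol (X : QTerm var varsort index bindex opsym) (a b : var) (zs : varsort) :
    qSwap a b zs (qSwap a b zs X) = X := qSwap_invol_pair.1 X a b zs

theorem qSwap_same_pair :
    (∀ X : QTerm var varsort index bindex opsym, ∀ a zs, qSwap a a zs X = X) ∧
    (∀ A : QAbs var varsort index bindex opsym, ∀ a zs, qSwapAbs a a zs A = A) := by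
  apply QTerm.my_ind
  · intro xs x a zs; simp [swapVarS_same]
  · intro d inp binp h1 h2 a zs
    simp only [qSwap_qOp]
    congr 1
    · funext i; cases h : inp i with
      | none => simp
      | some X => simp [h1 i X h]
    · funext j; cases h : binp j with
      | none => simp
      | some A => simp [h2 j A h]
  · intro xs x X hX a zs; simp [swapVarS_same, hX]

theorem qSwap_comm_pair :
    (∀ X : QTerm var varsort index bindex opsym, ∀ a b zs, qSwap a b zs X = qSwap b a zs X) ∧
    (∀ A : QAbs var varsort index bindex opsym, ∀ a b zs, qSwapAbs a b zs A = qSwapAbs b a zs A) := by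
  apply QTerm.my_ind
  · intro xs x a b zs; rw [qSwap_qVar, qSwap_qVar, swapVarS_comm]
  · intro d inp binp h1 h2 a b zs
    simp only [qSwap_qOp]
    congr 1
    · funext i; cases h : inp i with
      | none => simp
      | some X => simp only [h, Option.map_some]; rw [h1 i X h]
    · funext j; cases h : binp j with
      | none => simp
      | some A => simp only [h, Option.map_some]; rw [h2 j A h]
  · intro xs x X hX a b zs; rw [qSwapAbs_qAbs, qSwapAbs_qAbs, swapVarS_comm, hX]

theorem qSwap_conj_pair :
    (∀ X : QTerm var varsort index bindex opsym, ∀ a b c d zs zs',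
      qSwap a b zs (qSwap c d zs' X)
        = qSwap (swapVarS var varsort zs zs' a b c) (swapVarS var varsort zs zs' a b d) zs'
            (qSwap a b zs X)) ∧
    (∀ A : QAbs var varsort index bindex opsym, ∀ a b c d zs zs',
      qSwapAbs a b zs (qSwapAbs c d zs' A)
        = qSwapAbs (swapVarS var varsort zs zs' a b c) (swapVarS var varsort zs zs' a b d) zs'
            (qSwapAbs a b zs A)) := by
  apply QTerm.my_ind
  · intro xs x a b c d zs zs'
    rw [qSwap_qVar, qSwap_qVar, qSwap_qVar, qSwap_qVar, swapVarS_conj]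
  · intro d0 inp binp h1 h2 a b c d zs zs'
    simp only [qSwap_qOp]
    congr 1
    · funext i; cases h : inp i with
      | none => simp
      | some X => simp only [h, Option.map_some]; rw [h1 i X h]
    · funext j; cases h : binp j with
      | none => simp
      | some A => simp only [h, Option.map_some]; rw [h2 j A h]
  · intro xs x X hX a b c d zs zs'
    simp only [qSwapAbs_qAbs]
    rw [swapVarS_conj, hX]

theorem qSwap_conj (X : QTerm var varsort index bindex opsym) (a b c d : var) (zs zs' : varsort) :
    qSwap a b zs (qSwap c d zs' X)
      = qSwap (swapVarS var varsort zs zs' a b c) (swapVarS var varsort zs zs' a b d) zs'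
          (qSwap a b zs X) := qSwap_conj_pair.1 X a b c d zs zs'
theorem QFresh.equiv {ys : varsort} {y : var} {X : QTerm var varsort index bindex opsym}
    (h : QFresh ys y X) (a b : var) (zs : varsort) :
    QFresh ys (swapVarS var varsort zs ys a b y) (qSwap a b zs X) := by
  refine QFresh.rec
    (motive_1 := fun X _ => ∀ a b zs,
      QFresh ys (swapVarS var varsort zs ys a b y) (qSwap a b zs X))
    (motive_2 := fun A _ => ∀ a b zs,
      QFreshAbs ys (swapVarS var varsort zs ys a b y) (qSwapAbs a b zs A))
    ?_ ?_ ?_ ?_ h a b zs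
  · intro xs x hne a b zs
    rw [qSwap_qVar]
    refine QFresh.qVar fun he => hne ?_
    rw [Prod.mk.injEq] at he
    obtain ⟨h1, h2⟩ := he
    subst h1
    exact Prod.ext rfl (swapVarS_inj zs ys a b h2)
  · intro d inp binp _ _ ih1 ih2 a b zs
    rw [qSwap_qOp]
    refine QFresh.qOp ?_ ?_
    · intro i X hX
      cases h : inp i with
      | none => simp [h] at hX
      | some X0 =>
          simp only [h, Option.map_some] at hX
          obtain rfl : qSwap a b zs X0 = X := Option.some.inj hX
          exact ih1 i X0 h a b zs
    · intro j A hA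
      cases h : binp j with
      | none => simp [h] at hA
      | some A0 =>
          simp only [h, Option.map_some] at hA
          obtain rfl : qSwapAbs a b zs A0 = A := Option.some.inj hA
          exact ih2 j A0 h a b zs
  · intro X a b zs
    rw [qSwapAbs_qAbs]
    exact QFreshAbs.qAbs_bound
  · intro xs x X _ ih a b zs
    rw [qSwapAbs_qAbs]
    exact QFreshAbs.qAbs_body (ih a b zs)

theorem QFreshAbs.equiv {ys : varsort} {y : var} {A : QAbs var varsort index bindex opsym}
    (h : QFreshAbs ys y A) (a b : var) (zs : varsort) :
    QFreshAbs ys (swapVarS var varsort zs ys a b y) (qSwapAbs a b zs A) := by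
  cases h with
  | qAbs_bound => rw [qSwapAbs_qAbs]; exact QFreshAbs.qAbs_bound
  | qAbs_body hb => rw [qSwapAbs_qAbs]; exact QFreshAbs.qAbs_body (hb.equiv a b zs)

/-- Backwards direction of equivariance. -/
theorem QFresh.equiv' {ys : varsort} {y : var} {X : QTerm var varsort index bindex opsym}
    (a b : var) (zs : varsort)
    (h : QFresh ys (swapVarS var varsort zs ys a b y) (qSwap a b zs X)) :
    QFresh ys y X := by
  have := h.equiv a b zs
  rwa [swapVarS_invol, qSwap_invol] at this

/-- Equivariance with fixed variable. -/
theorem QFresh.equiv_fix {ys : varsort} {y : var} {X : QTerm var varsort index bindex opsym}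
    (h : QFresh ys y X) (a b : var) (zs : varsort) (h1 : y ≠ a) (h2 : y ≠ b) :
    QFresh ys y (qSwap a b zs X) := by
  have := h.equiv a b zs
  rwa [swapVarS_id _ _ _ _ _ h1 h2] at this
theorem Alpha.equiv_pair :
    (∀ {X Y : QTerm var varsort index bindex opsym}, Alpha X Y →
      ∀ a b zs, Alpha (qSwap a b zs X) (qSwap a b zs Y)) ∧
    (∀ {A B : QAbs var varsort index bindex opsym}, AlphaAbs A B →
      ∀ a b zs, AlphaAbs (qSwapAbs a b zs A) (qSwapAbs a b zs B)) := by
  have key : ∀ {X Y : QTerm var varsort index bindex opsym} (h : Alpha X Y),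
      ∀ a b zs, Alpha (qSwap a b zs X) (qSwap a b zs Y) := by
    intro X Y h
    refine Alpha.rec
      (motive_1 := fun X Y _ => ∀ a b zs, Alpha (qSwap a b zs X) (qSwap a b zs Y))
      (motive_2 := fun A B _ => ∀ a b zs, AlphaAbs (qSwapAbs a b zs A) (qSwapAbs a b zs B))
      ?_ ?_ ?_ h
    · intro xs x a b zs
      rw [qSwap_qVar]
      exact Alpha.qVar
    · intro d inp binp inp' binp' hd _ hbd _ ih1 ih2 a b zs
      rw [qSwap_qOp, qSwap_qOp]
      refine Alpha.qOp ?_ ?_ ?_ ?_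
      · intro i; simp [Option.map_eq_none_iff, hd i]
      · intro i Z Z' hZ hZ'
        cases h1 : inp i with
        | none => simp [h1] at hZ
        | some X0 =>
          cases h2 : inp' i with
          | none => simp [h2] at hZ'
          | some X0' =>
            simp only [h1, h2, Option.map_some] at hZ hZ'
            obtain rfl := Option.some.inj hZ
            obtain rfl := Option.some.inj hZ'
            exact ih1 i X0 X0' h1 h2 a b zs
      · intro j; simp [Option.map_eq_none_iff, hbd j]
      · intro j A A' hA hA'
        cases h1 : binp j with
        | none => simp [h1] at hA
        | some A0 =>
          cases h2 : binp' j with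
          | none => simp [h2] at hA'
          | some A0' =>
            simp only [h1, h2, Option.map_some] at hA hA'
            obtain rfl := Option.some.inj hA
            obtain rfl := Option.some.inj hA'
            exact ih2 j A0 A0' h1 h2 a b zs
    · intro xs x x' X X' y hy hf hf' _ ih a b zs
      rw [qSwapAbs_qAbs, qSwapAbs_qAbs]
      refine AlphaAbs.qAbs (y := swapVarS var varsort zs xs a b y) ?_
        (hf.equiv a b zs) (hf'.equiv a b zs) ?_
      · intro hmem
        rcases hmem with h | h
        · exact (hy (Or.inl (swapVarS_inj zs xs a b h)))
        · exact (hy (Or.inr (swapVarS_inj zs xs a b h)))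
      · have := ih a b zs
        rwa [qSwap_conj X a b y x zs xs, qSwap_conj X' a b y x' zs xs] at this
  refine ⟨fun h => key h, fun {A B} h a b zs => ?_⟩
  cases h with
  | qAbs hy hf hf' ha =>
    rw [qSwapAbs_qAbs, qSwapAbs_qAbs]
    refine AlphaAbs.qAbs (y := swapVarS var varsort zs _ a b _) ?_
      (hf.equiv a b zs) (hf'.equiv a b zs) ?_
    · intro hmem
      rcases hmem with h | h
      · exact (hy (Or.inl (swapVarS_inj _ _ a b h)))
      · exact (hy (Or.inr (swapVarS_inj _ _ a b h)))
    · have := key ha a b zs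
      rwa [qSwap_conj _ a b _ _ zs _, qSwap_conj _ a b _ _ zs _] at this

theorem Alpha.equiv {X Y : QTerm var varsort index bindex opsym} (h : Alpha X Y)
    (a b : var) (zs : varsort) : Alpha (qSwap a b zs X) (qSwap a b zs Y) :=
  Alpha.equiv_pair.1 h a b zs

theorem AlphaAbs.equiv {A B : QAbs var varsort index bindex opsym} (h : AlphaAbs A B)
    (a b : var) (zs : varsort) : AlphaAbs (qSwapAbs a b zs A) (qSwapAbs a b zs B) :=
  Alpha.equiv_pair.2 h a b zs
theorem Alpha.fresh_pair :
    (∀ {X Y : QTerm var varsort index bindex opsym}, Alpha X Y →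
      ∀ ys y, QFresh ys y X → QFresh ys y Y) ∧
    (∀ {A B : QAbs var varsort index bindex opsym}, AlphaAbs A B →
      ∀ ys y, QFreshAbs ys y A → QFreshAbs ys y B) := by
  have absStep : ∀ {xs : varsort} {x x' w : var} {X X' : QTerm var varsort index bindex opsym},
      w ∉ ({x, x'} : Set var) → QFresh xs w X → QFresh xs w X' →
      (∀ ys y, QFresh ys y (qSwap w x xs X) → QFresh ys y (qSwap w x' xs X')) →
      ∀ ys y, QFreshAbs ys y (.qAbs xs x X) → QFreshAbs ys y (.qAbs xs x' X') := by
    intro xs x x' w X X' hw hfw hfw' ih ys y hy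
    have hwx : w ≠ x := fun h => hw (Or.inl h)
    have hwx' : w ≠ x' := fun h => hw (Or.inr h)
    by_cases hyx' : (ys, y) = (xs, x')
    · obtain ⟨rfl, rfl⟩ := Prod.mk.injEq .. ▸ hyx'
      exact QFreshAbs.qAbs_bound
    · -- main argument used when (ys, y) = (xs, x)
      have bodyX' : (ys, y) = (xs, x) → QFresh xs x X' := by
        intro hcase
        obtain ⟨rfl, rfl⟩ := Prod.mk.injEq .. ▸ hcase
        have hxx' : y ≠ x' := fun h => hyx' (by rw [h])
        have h1 : QFresh ys y (qSwap w y ys X) := by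
          have := hfw.equiv w y ys
          rwa [show swapVarS var varsort ys ys w y w = y by
            unfold swapVarS swapVar; rw [if_pos rfl, if_pos rfl]] at this
        have h2 := ih ys y h1
        refine QFresh.equiv' w x' ys ?_
        rwa [show swapVarS var varsort ys ys w x' y = y by
          unfold swapVarS swapVar
          rw [if_pos rfl, if_neg (Ne.symm hwx), if_neg hxx']]
      by_cases hyx : (ys, y) = (xs, x)
      · obtain ⟨rfl, rfl⟩ := Prod.mk.injEq .. ▸ hyx
        exact QFreshAbs.qAbs_body (bodyX' rfl)
      · cases hy with
        | qAbs_bound => exact absurd rfl hyx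
        | qAbs_body hb =>
          by_cases hyw : (ys, y) = (xs, w)
          · obtain ⟨rfl, rfl⟩ := Prod.mk.injEq .. ▸ hyw
            exact QFreshAbs.qAbs_body hfw'
          · -- now swapVarS fixes y for both swaps
            have hfix : ∀ u : var, (ys, y) ≠ (xs, u) → y ≠ w ∨ ys ≠ xs →
                swapVarS var varsort xs ys w u y = y := by
              intro u hne hne2
              unfold swapVarS swapVar
              by_cases hs : ys = xs
              · subst hs
                have hyu : y ≠ u := fun h => hne (by rw [h])
                have hyw2 : y ≠ w := by
                  rcases hne2 with h | h
                  · exact h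
                  · exact absurd rfl h
                rw [if_pos rfl, if_neg hyw2, if_neg hyu]
              · rw [if_neg hs]
            have hyw2 : y ≠ w ∨ ys ≠ xs := by
              by_cases hs : ys = xs
              · subst hs
                exact Or.inl fun h => hyw (by rw [h])
              · exact Or.inr hs
            have h1 : QFresh ys y (qSwap w x xs X) := by
              have := hb.equiv w x xs
              rwa [hfix x hyx hyw2] at this
            have h2 := ih ys y h1
            have h3 : QFresh ys y X' := by
              refine QFresh.equiv' w x' xs ?_
              rwa [hfix x' hyx' hyw2]
            exact QFreshAbs.qAbs_body h3
  have key : ∀ {X Y : QTerm var varsort index bindex opsym}, Alpha X Y →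
      ∀ ys y, QFresh ys y X → QFresh ys y Y := by
    intro X Y h
    refine Alpha.rec
      (motive_1 := fun X Y _ => ∀ ys y, QFresh ys y X → QFresh ys y Y)
      (motive_2 := fun A B _ => ∀ ys y, QFreshAbs ys y A → QFreshAbs ys y B)
      ?_ ?_ ?_ h
    · exact fun ys y hy => hy
    · intro d inp binp inp' binp' hd _ hbd _ ih1 ih2 ys y hy
      cases hy with
      | qOp hf hbf =>
        refine QFresh.qOp ?_ ?_
        · intro i X' hX'
          cases h1 : inp i with
          | none => exact absurd hX' ((hd i).mp h1 ▸ fun h => by simp_all)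
          | some X0 => exact ih1 i X0 X' h1 hX' ys y (hf i X0 h1)
        · intro j A' hA'
          cases h1 : binp j with
          | none => exact absurd hA' ((hbd j).mp h1 ▸ fun h => by simp_all)
          | some A0 => exact ih2 j A0 A' h1 hA' ys y (hbf j A0 h1)
    · intro xs x x' X X' w hw hfw hfw' _ ih
      exact absStep hw hfw hfw' ih
  refine ⟨fun h => key h, ?_⟩
  intro A B h ys y hy
  cases h with
  | qAbs hw hfw hfw' ha =>
    exact absStep hw hfw hfw' (fun ys y => key ha ys y) ys y hy

theorem Alpha.fresh {X Y : QTerm var varsort index bindex opsym} (h : Alpha X Y)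
    {ys : varsort} {y : var} (hf : QFresh ys y X) : QFresh ys y Y :=
  Alpha.fresh_pair.1 h ys y hf
theorem idom_map {α β γ : Type u} (inp : Input α β) (f : β → γ) :
    idom (fun a => (inp a).map f) = idom inp := by
  ext a
  simp [idom, Option.map_eq_none_iff]

theorem QGood.qSwap_pair :
    (∀ X : QTerm var varsort index bindex opsym,
      QGood X → ∀ a b zs, QGood (qSwap a b zs X)) ∧
    (∀ A : QAbs var varsort index bindex opsym,
      QGoodAbs A → ∀ a b zs, QGoodAbs (qSwapAbs a b zs A)) := by
  apply QTerm.my_ind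
  · intro xs x _ a b zs; rw [qSwap_qVar]; exact QGood.qVar
  · intro d inp binp ih1 ih2 hg a b zs
    cases hg with
    | qOp hg1 hg2 hs1 hs2 =>
      rw [qSwap_qOp]
      refine QGood.qOp ?_ ?_ ?_ ?_
      · intro i X hX
        cases h : inp i with
        | none => simp [h] at hX
        | some X0 =>
          simp only [h, Option.map_some] at hX
          obtain rfl := Option.some.inj hX
          exact ih1 i X0 h (hg1 i X0 h) a b zs
      · intro j A hA
        cases h : binp j with
        | none => simp [h] at hA
        | some A0 =>
          simp only [h, Option.map_some] at hA
          obtain rfl := Option.some.inj hA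
          exact ih2 j A0 h (hg2 j A0 h) a b zs
      · unfold smallDom; rwa [idom_map]
      · unfold smallDom; rwa [idom_map]
  · intro xs x X ih hg a b zs
    cases hg with
    | qAbs hX => rw [qSwapAbs_qAbs]; exact QGoodAbs.qAbs (ih hX a b zs)

theorem QGood.qSwap {X : QTerm var varsort index bindex opsym} (h : QGood X)
    (a b : var) (zs : varsort) : QGood (_root_.qSwap a b zs X) :=
  QGood.qSwap_pair.1 X h a b zs

theorem QGood.qSwap' {X : QTerm var varsort index bindex opsym}
    (a b : var) (zs : varsort) (h : QGood (_root_.qSwap a b zs X)) : QGood X := by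
  have := h.qSwap a b zs
  rwa [qSwap_invol] at this

theorem Alpha.good_pair :
    (∀ {X Y : QTerm var varsort index bindex opsym}, Alpha X Y → QGood X → QGood Y) ∧
    (∀ {A B : QAbs var varsort index bindex opsym}, AlphaAbs A B → QGoodAbs A → QGoodAbs B) := by
  have key : ∀ {X Y : QTerm var varsort index bindex opsym}, Alpha X Y → QGood X → QGood Y := by
    intro X Y h
    refine Alpha.rec
      (motive_1 := fun X Y _ => QGood X → QGood Y)
      (motive_2 := fun A B _ => QGoodAbs A → QGoodAbs B)
      ?_ ?_ ?_ h
    · exact fun h => h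
    · intro d inp binp inp' binp' hd _ hbd _ ih1 ih2 hg
      cases hg with
      | qOp hg1 hg2 hs1 hs2 =>
        refine QGood.qOp ?_ ?_ ?_ ?_
        · intro i X' hX'
          cases h1 : inp i with
          | none => exact absurd hX' ((hd i).mp h1 ▸ fun h => by simp_all)
          | some X0 => exact ih1 i X0 X' h1 hX' (hg1 i X0 h1)
        · intro j A' hA'
          cases h1 : binp j with
          | none => exact absurd hA' ((hbd j).mp h1 ▸ fun h => by simp_all)
          | some A0 => exact ih2 j A0 A' h1 hA' (hg2 j A0 h1)
        · unfold smallDom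
          have : idom inp' = idom inp := by
            ext i
            simp only [idom, Set.mem_setOf_eq, ne_eq]
            exact not_congr (hd i).symm
          rwa [this]
        · unfold smallDom
          have : idom binp' = idom binp := by
            ext j
            simp only [idom, Set.mem_setOf_eq, ne_eq]
            exact not_congr (hbd j).symm
          rwa [this]
    · intro xs x x' X X' y hy hf hf' ha ih hg
      cases hg with
      | qAbs hX =>
        refine QGoodAbs.qAbs ?_
        exact QGood.qSwap' y x' xs (ih (hX.qSwap y x xs))
  exact ⟨fun h => key h, fun {A B} h hg => by
    cases h with
    | qAbs hy hf hf' ha =>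
      cases hg with
      | qAbs hX => exact QGoodAbs.qAbs (QGood.qSwap' _ _ _ (key ha (hX.qSwap _ _ _)))⟩

theorem Alpha.good {X Y : QTerm var varsort index bindex opsym} (h : Alpha X Y)
    (hg : QGood X) : QGood Y := Alpha.good_pair.1 h hg
theorem nonfresh_small_pair (hinf : Cardinal.aleph0 ≤ Cardinal.mk var)
    (hreg : (Cardinal.mk var).IsRegular) :
    (∀ X : QTerm var varsort index bindex opsym, QGood X →
      ∀ ys, Cardinal.mk {u : var | ¬ QFresh ys u X} < Cardinal.mk var) ∧
    (∀ A : QAbs var varsort index bindex opsym, QGoodAbs A →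
      ∀ ys, Cardinal.mk {u : var | ¬ QFreshAbs ys u A} < Cardinal.mk var) := by
  apply QTerm.my_ind
  · intro xs x _ ys
    have hsub : {u : var | ¬ QFresh ys u ((.qVar xs x) : QTerm var varsort index bindex opsym)} ⊆ {x} := by
      intro u hu
      by_contra hux
      refine hu (QFresh.qVar fun he => ?_)
      obtain ⟨h1, h2⟩ := Prod.mk.injEq .. ▸ he
      exact hux h2
    calc Cardinal.mk {u : var | ¬ QFresh ys u ((.qVar xs x) : QTerm var varsort index bindex opsym)}
        ≤ Cardinal.mk ({x} : Set var) := Cardinal.mk_le_mk_of_subset hsub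
      _ = 1 := Cardinal.mk_singleton x
      _ < Cardinal.aleph0 := Cardinal.one_lt_aleph0
      _ ≤ Cardinal.mk var := hinf
  · intro d inp binp ih1 ih2 hg ys
    cases hg with
    | qOp hg1 hg2 hs1 hs2 =>
      set S1 : Set var := ⋃ i : idom inp, {u | ∃ X, inp i.1 = some X ∧ ¬ QFresh ys u X}
      set S2 : Set var := ⋃ j : idom binp, {u | ∃ A, binp j.1 = some A ∧ ¬ QFreshAbs ys u A}
      have hsub : {u : var | ¬ QFresh ys u ((.qOp d inp binp) : QTerm var varsort index bindex opsym)} ⊆ S1 ∪ S2 := by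
        intro u hu
        by_contra hnu
        refine hu (QFresh.qOp ?_ ?_)
        · intro i X hX
          by_contra hf
          exact hnu (Or.inl (Set.mem_iUnion.2 ⟨⟨i, fun h => by simp [h] at hX⟩, ⟨X, hX, hf⟩⟩))
        · intro j A hA
          by_contra hf
          exact hnu (Or.inr (Set.mem_iUnion.2 ⟨⟨j, fun h => by simp [h] at hA⟩, ⟨A, hA, hf⟩⟩))
      have hS1 : Cardinal.mk S1 < Cardinal.mk var := by
        refine lt_of_le_of_lt Cardinal.mk_iUnion_le_sum_mk ?_
        refine Cardinal.sum_lt_of_isRegular hreg hs1 ?_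
        rintro ⟨i, hi⟩
        obtain ⟨X, hX⟩ := Option.ne_none_iff_exists'.1 hi
        have : {u : var | ∃ X', inp i = some X' ∧ ¬ QFresh ys u X'}
            = {u : var | ¬ QFresh ys u X} := by
          ext u
          constructor
          · rintro ⟨X', hX', hf⟩
            rw [hX] at hX'
            exact Option.some.inj hX' ▸ hf
          · intro hf; exact ⟨X, hX, hf⟩
        rw [this]
        exact ih1 i X hX (hg1 i X hX) ys
      have hS2 : Cardinal.mk S2 < Cardinal.mk var := by
        refine lt_of_le_of_lt Cardinal.mk_iUnion_le_sum_mk ?_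
        refine Cardinal.sum_lt_of_isRegular hreg hs2 ?_
        rintro ⟨j, hj⟩
        obtain ⟨A, hA⟩ := Option.ne_none_iff_exists'.1 hj
        have : {u : var | ∃ A', binp j = some A' ∧ ¬ QFreshAbs ys u A'}
            = {u : var | ¬ QFreshAbs ys u A} := by
          ext u
          constructor
          · rintro ⟨A', hA', hf⟩
            rw [hA] at hA'
            exact Option.some.inj hA' ▸ hf
          · intro hf; exact ⟨A, hA, hf⟩
        rw [this]
        exact ih2 j A hA (hg2 j A hA) ys
      calc Cardinal.mk {u : var | ¬ QFresh ys u ((.qOp d inp binp) : QTerm var varsort index bindex opsym)}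
          ≤ Cardinal.mk (S1 ∪ S2 : Set var) := Cardinal.mk_le_mk_of_subset hsub
        _ ≤ Cardinal.mk S1 + Cardinal.mk S2 := Cardinal.mk_union_le S1 S2
        _ < Cardinal.mk var := Cardinal.add_lt_of_lt hinf hS1 hS2
  · intro xs x X ih hg ys
    cases hg with
    | qAbs hX =>
      have hsub : {u : var | ¬ QFreshAbs ys u ((.qAbs xs x X) : QAbs var varsort index bindex opsym)} ⊆ {u | ¬ QFresh ys u X} := by
        intro u hu hf
        exact hu (QFreshAbs.qAbs_body hf)
      exact lt_of_le_of_lt (Cardinal.mk_le_mk_of_subset hsub) (ih hX ys)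

theorem fresh_exists (hinf : Cardinal.aleph0 ≤ Cardinal.mk var)
    (hreg : (Cardinal.mk var).IsRegular)
    (T1 T2 T3 : QTerm var varsort index bindex opsym)
    (h1 : QGood T1) (h2 : QGood T2) (h3 : QGood T3) (ys : varsort) (l : List var) :
    ∃ u : var, u ∉ l ∧ QFresh ys u T1 ∧ QFresh ys u T2 ∧ QFresh ys u T3 := by
  set U : Set var := {v | v ∈ l} ∪ {u | ¬ QFresh ys u T1} ∪ {u | ¬ QFresh ys u T2}
    ∪ {u | ¬ QFresh ys u T3}
  have hU : Cardinal.mk U < Cardinal.mk var := by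
    have hl : Cardinal.mk {v : var | v ∈ l} < Cardinal.mk var :=
      lt_of_lt_of_le (l.finite_toSet.lt_aleph0) hinf
    have n1 := (nonfresh_small_pair hinf hreg).1 T1 h1 ys
    have n2 := (nonfresh_small_pair hinf hreg).1 T2 h2 ys
    have n3 := (nonfresh_small_pair hinf hreg).1 T3 h3 ys
    calc Cardinal.mk U ≤ _ + _ := Cardinal.mk_union_le _ _
      _ < Cardinal.mk var := by
        refine Cardinal.add_lt_of_lt hinf ?_ n3
        refine lt_of_le_of_lt (Cardinal.mk_union_le _ _) ?_
        refine Cardinal.add_lt_of_lt hinf ?_ n2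
        exact lt_of_le_of_lt (Cardinal.mk_union_le _ _) (Cardinal.add_lt_of_lt hinf hl n1)
  have hne : U ≠ Set.univ := by
    intro h
    rw [h, Cardinal.mk_univ] at hU
    exact lt_irrefl _ hU
  obtain ⟨u, hu⟩ := (Set.ne_univ_iff_exists_notMem U).1 hne
  refine ⟨u, ?_, ?_, ?_, ?_⟩
  · exact fun h => hu (Or.inl (Or.inl (Or.inl h)))
  · by_contra h; exact hu (Or.inl (Or.inl (Or.inr h)))
  · by_contra h; exact hu (Or.inl (Or.inr h))
  · by_contra h; exact hu (Or.inr h)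
/-- Iterated swapping on quasiterms. -/
noncomputable def swaps (l : List (var × var × varsort)) :
    QTerm var varsort index bindex opsym → QTerm var varsort index bindex opsym :=
  fun X => l.foldr (fun p Y => qSwap p.1 p.2.1 p.2.2 Y) X

/-- Iterated swapping on quasiabstractions. -/
noncomputable def swapsAbs (l : List (var × var × varsort)) :
    QAbs var varsort index bindex opsym → QAbs var varsort index bindex opsym :=
  fun A => l.foldr (fun p B => qSwapAbs p.1 p.2.1 p.2.2 B) A

/-- Iterated sorted swapping on variables. -/
noncomputable def swapsVar (l : List (var × var × varsort)) (xs : varsort) (x : var) : var :=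
  l.foldr (fun p v => swapVarS var varsort p.2.2 xs p.1 p.2.1 v) x

@[simp] theorem swaps_nil (X : QTerm var varsort index bindex opsym) : swaps [] X = X := rfl

@[simp] theorem swaps_cons (p : var × var × varsort) (l : List (var × var × varsort))
    (X : QTerm var varsort index bindex opsym) :
    swaps (p :: l) X = qSwap p.1 p.2.1 p.2.2 (swaps l X) := rfl

@[simp] theorem swapsAbs_nil (A : QAbs var varsort index bindex opsym) : swapsAbs [] A = A := rfl

@[simp] theorem swapsAbs_cons (p : var × var × varsort) (l : List (var × var × varsort))
    (A : QAbs var varsort index bindex opsym) :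
    swapsAbs (p :: l) A = qSwapAbs p.1 p.2.1 p.2.2 (swapsAbs l A) := rfl

theorem swaps_qVar (l : List (var × var × varsort)) (xs : varsort) (x : var) :
    swaps l ((.qVar xs x) : QTerm var varsort index bindex opsym)
      = .qVar xs (swapsVar l xs x) := by
  induction l with
  | nil => rfl
  | cons p l ih => rw [swaps_cons, ih, qSwap_qVar]; rfl

theorem swaps_qOp (l : List (var × var × varsort)) (d : opsym)
    (inp : index → Option (QTerm var varsort index bindex opsym))
    (binp : bindex → Option (QAbs var varsort index bindex opsym)) :
    swaps l ((.qOp d inp binp) : QTerm var varsort index bindex opsym)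
      = .qOp d (fun i => (inp i).map (swaps l)) (fun j => (binp j).map (swapsAbs l)) := by
  induction l with
  | nil =>
    simp only [swaps_nil]
    congr 1
    · funext i; cases h : inp i <;> simp [h]
    · funext j; cases h : binp j <;> simp [h]
  | cons p l ih =>
    rw [swaps_cons, ih, qSwap_qOp]
    congr 1
    · funext i; cases h : inp i <;> simp [h]
    · funext j; cases h : binp j <;> simp [h]

theorem swapsAbs_qAbs (l : List (var × var × varsort)) (xs : varsort) (x : var)
    (X : QTerm var varsort index bindex opsym) :
    swapsAbs l ((.qAbs xs x X) : QAbs var varsort index bindex opsym)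
      = .qAbs xs (swapsVar l xs x) (swaps l X) := by
  induction l with
  | nil => rfl
  | cons p l ih => rw [swapsAbs_cons, ih, qSwapAbs_qAbs]; rfl

theorem QGood.swaps {X : QTerm var varsort index bindex opsym} (h : QGood X)
    (l : List (var × var × varsort)) : QGood (_root_.swaps l X) := by
  induction l with
  | nil => exact h
  | cons p l ih => exact ih.qSwap p.1 p.2.1 p.2.2
theorem pair_mem_iff {α : Type u} {a b c : α} : a ∈ ({b, c} : Set α) ↔ a = b ∨ a = c := by
  simp [Set.mem_insert_iff]

theorem pair_not_mem {α : Type u} {a b c : α} (h1 : a ≠ b) (h2 : a ≠ c) :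
    a ∉ ({b, c} : Set α) := fun h => (pair_mem_iff.1 h).elim h1 h2

theorem alpha_refl_pair (hinf : Cardinal.aleph0 ≤ Cardinal.mk var)
    (hreg : (Cardinal.mk var).IsRegular) :
    (∀ X : QTerm var varsort index bindex opsym, QGood X →
      ∀ l, Alpha (swaps l X) (swaps l X)) ∧
    (∀ A : QAbs var varsort index bindex opsym, QGoodAbs A →
      ∀ l, AlphaAbs (swapsAbs l A) (swapsAbs l A)) := by
  apply QTerm.my_ind
  · intro xs x _ l
    rw [swaps_qVar]
    exact Alpha.qVar
  · intro d inp binp ih1 ih2 hg l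
    cases hg with
    | qOp hg1 hg2 _ _ =>
      rw [swaps_qOp]
      refine Alpha.qOp (fun i => Iff.rfl) ?_ (fun j => Iff.rfl) ?_
      · intro i Z Z' hZ hZ'
        cases h : inp i with
        | none => simp [h] at hZ
        | some X0 =>
          simp only [h, Option.map_some] at hZ hZ'
          obtain rfl := Option.some.inj hZ
          obtain rfl := Option.some.inj hZ'
          exact ih1 i X0 h (hg1 i X0 h) l
      · intro j A A' hA hA'
        cases h : binp j with
        | none => simp [h] at hA
        | some A0 =>
          simp only [h, Option.map_some] at hA hA'
          obtain rfl := Option.some.inj hA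
          obtain rfl := Option.some.inj hA'
          exact ih2 j A0 h (hg2 j A0 h) l
  · intro xs x X ih hg l
    cases hg with
    | qAbs hX =>
      rw [swapsAbs_qAbs]
      set b := swapsVar l xs x
      set P := swaps l X with hP
      obtain ⟨u, hul, hu1, _, _⟩ :=
        fresh_exists hinf hreg P P P (hX.swaps l) (hX.swaps l) (hX.swaps l) xs [b]
      have hub : u ≠ b := fun h => hul (h ▸ List.mem_singleton_self b)
      refine AlphaAbs.qAbs (y := u) (pair_not_mem hub hub) hu1 hu1 ?_
      exact ih hX ((u, b, xs) :: l)

theorem alpha_symm_pair :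
    (∀ X : QTerm var varsort index bindex opsym,
      ∀ l Y, Alpha (swaps l X) Y → Alpha Y (swaps l X)) ∧
    (∀ A : QAbs var varsort index bindex opsym,
      ∀ l B, AlphaAbs (swapsAbs l A) B → AlphaAbs B (swapsAbs l A)) := by
  apply QTerm.my_ind
  · intro xs x l Y h
    rw [swaps_qVar] at h ⊢
    cases h
    exact Alpha.qVar
  · intro d inp binp ih1 ih2 l Y h
    rw [swaps_qOp] at h ⊢
    cases h with
    | qOp hd h2 hbd h4 =>
      refine Alpha.qOp (fun i => (hd i).symm) ?_ (fun j => (hbd j).symm) ?_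
      · intro i Z Z' hZ hZ'
        cases h : inp i with
        | none => simp [h] at hZ'
        | some X0 =>
          simp only [h, Option.map_some] at hZ'
          obtain rfl := Option.some.inj hZ'
          exact ih1 i X0 h l Z (h2 i (swaps l X0) Z (by simp [h]) hZ)
      · intro j A A' hA hA'
        cases h : binp j with
        | none => simp [h] at hA'
        | some A0 =>
          simp only [h, Option.map_some] at hA'
          obtain rfl := Option.some.inj hA'
          exact ih2 j A0 h l A (h4 j (swapsAbs l A0) A (by simp [h]) hA)
  · intro xs x X ih l B h
    rw [swapsAbs_qAbs] at h ⊢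
    cases h with
    | qAbs hy hf hf' ha =>
      rename_i x' X' y
      refine AlphaAbs.qAbs (y := y)
        (pair_not_mem (fun he => hy (Or.inr he)) (fun he => hy (Or.inl he))) hf' hf ?_
      exact ih ((y, swapsVar l xs x, xs) :: l) (qSwap y x' xs X') ha
theorem Alpha.symm' {X Y : QTerm var varsort index bindex opsym} (h : Alpha X Y) :
    Alpha Y X := alpha_symm_pair.1 X [] Y h

theorem AlphaAbs.symm' {A B : QAbs var varsort index bindex opsym} (h : AlphaAbs A B) :
    AlphaAbs B A := alpha_symm_pair.2 A [] B h

theorem swapVar_left (a b : var) : swapVar var a b a = b := by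
  unfold swapVar; rw [if_pos rfl]

theorem swapVar_right (a b : var) : swapVar var a b b = a := by
  unfold swapVar; split_ifs <;> simp_all

theorem swapVar_other {a b x : var} (h1 : x ≠ a) (h2 : x ≠ b) : swapVar var a b x = x := by
  unfold swapVar; rw [if_neg h1, if_neg h2]

theorem swapVarS_sortne {zs xs : varsort} (h : xs ≠ zs) (a b x : var) :
    swapVarS var varsort zs xs a b x = x := by
  unfold swapVarS; rw [if_neg h]

theorem swapVarS_same_sort (zs : varsort) (a b x : var) :
    swapVarS var varsort zs zs a b x = swapVar var a b x := by
  unfold swapVarS; rw [if_pos rfl]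

theorem qSwap_conj_same (P : QTerm var varsort index bindex opsym) (a b c d : var)
    (xs : varsort) :
    qSwap a b xs (qSwap c d xs P)
      = qSwap (swapVar var a b c) (swapVar var a b d) xs (qSwap a b xs P) := by
  rw [qSwap_conj P a b c d xs xs, swapVarS_same_sort, swapVarS_same_sort]

theorem qSwap_comm' (P : QTerm var varsort index bindex opsym) (a b : var) (xs : varsort) :
    qSwap a b xs P = qSwap b a xs P := qSwap_comm_pair.1 P a b xs

theorem freshswap_pair (hinf : Cardinal.aleph0 ≤ Cardinal.mk var)
    (hreg : (Cardinal.mk var).IsRegular) :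
    (∀ X : QTerm var varsort index bindex opsym, QGood X →
      ∀ l z1 z2 zs, QFresh zs z1 (swaps l X) → QFresh zs z2 (swaps l X) →
        Alpha (qSwap z1 z2 zs (swaps l X)) (swaps l X)) ∧
    (∀ A : QAbs var varsort index bindex opsym, QGoodAbs A →
      ∀ l z1 z2 zs, QFreshAbs zs z1 (swapsAbs l A) → QFreshAbs zs z2 (swapsAbs l A) →
        AlphaAbs (qSwapAbs z1 z2 zs (swapsAbs l A)) (swapsAbs l A)) := by
  apply QTerm.my_ind
  · intro xs x _ l z1 z2 zs hf1 hf2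
    rw [swaps_qVar] at hf1 hf2 ⊢
    cases hf1 with
    | qVar hne1 =>
      cases hf2 with
      | qVar hne2 =>
        rw [qSwap_qVar]
        have heq : swapVarS var varsort zs xs z1 z2 (swapsVar l xs x) = swapsVar l xs x := by
          by_cases hs : xs = zs
          · subst hs
            exact swapVarS_id _ _ _ _ _ (fun h => hne1 (by rw [h])) (fun h => hne2 (by rw [h]))
          · exact swapVarS_sortne hs _ _ _
        rw [heq]
        exact Alpha.qVar
  · intro d inp binp ih1 ih2 hg l z1 z2 zs hf1 hf2
    cases hg with
    | qOp hg1 hg2 _ _ =>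
      rw [swaps_qOp] at hf1 hf2 ⊢
      cases hf1 with
      | qOp ha1 hb1 =>
        cases hf2 with
        | qOp ha2 hb2 =>
          rw [qSwap_qOp]
          refine Alpha.qOp (fun i => by simp [Option.map_eq_none_iff]) ?_
            (fun j => by simp [Option.map_eq_none_iff]) ?_
          · intro i Z Z' hZ hZ'
            cases h : inp i with
            | none => simp [h] at hZ
            | some X0 =>
              simp only [h, Option.map_some] at hZ hZ'
              obtain rfl := Option.some.inj hZ'
              obtain rfl := Option.some.inj hZ
              exact ih1 i X0 h (hg1 i X0 h) l z1 z2 zs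
                (ha1 i _ (by simp [h])) (ha2 i _ (by simp [h]))
          · intro j A A' hA hA'
            cases h : binp j with
            | none => simp [h] at hA
            | some A0 =>
              simp only [h, Option.map_some] at hA hA'
              obtain rfl := Option.some.inj hA'
              obtain rfl := Option.some.inj hA
              exact ih2 j A0 h (hg2 j A0 h) l z1 z2 zs
                (hb1 j _ (by simp [h])) (hb2 j _ (by simp [h]))
  · intro xs x X ih hgA l z1 z2 zs hf1 hf2
    have hgX : QGood X := by cases hgA with | qAbs h => exact h
    rw [swapsAbs_qAbs] at hf1 hf2 ⊢
    rw [qSwapAbs_qAbs]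
    have hPg : QGood (swaps l X) := hgX.swaps l
    by_cases hzz : z1 = z2
    · subst hzz
      rw [qSwap_same_pair.1, swapVarS_same]
      have := (alpha_refl_pair hinf hreg).2 (.qAbs xs x X) hgA l
      rwa [swapsAbs_qAbs] at this
    by_cases hs : xs = zs
    · subst hs
      rw [swapVarS_same_sort]
      have inv : ∀ z, QFreshAbs xs z (QAbs.qAbs xs (swapsVar l xs x) (swaps l X)) →
          z = swapsVar l xs x ∨ QFresh xs z (swaps l X) := by
        intro z hz
        cases hz with
        | qAbs_bound => exact Or.inl rfl
        | qAbs_body h => exact Or.inr h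
      by_cases hb1 : z1 = swapsVar l xs x
      · -- z1 is the binder
        have h2 : QFresh xs z2 (swaps l X) := by
          rcases inv z2 hf2 with h | h
          · exact absurd (hb1.trans h.symm) hzz
          · exact h
        rw [← hb1, swapVar_left]
        obtain ⟨u, hul, huP, huS, _⟩ := fresh_exists hinf hreg (swaps l X)
          (qSwap z1 z2 xs (swaps l X)) (swaps l X) hPg (hPg.qSwap z1 z2 xs) hPg xs [z1, z2]
        have hu1 : u ≠ z1 := fun h => hul (by simp [h])
        have hu2 : u ≠ z2 := fun h => hul (by simp [h])
        refine AlphaAbs.qAbs (y := u) (pair_not_mem hu2 hu1) huS huP ?_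
        have key : Alpha (qSwap u z2 xs (swaps l X)) (swaps l X) := ih hgX l u z2 xs huP h2
        have keq := key.equiv z1 u xs
        have e1 : qSwap u z2 xs (qSwap z1 z2 xs (swaps l X))
            = qSwap z1 u xs (qSwap u z2 xs (swaps l X)) := by
          rw [qSwap_conj_same, swapVar_other (Ne.symm hu1) hzz, swapVar_right]
        rw [e1, qSwap_comm' (swaps l X) u z1]
        exact keq
      · by_cases hb2 : z2 = swapsVar l xs x
        · -- z2 is the binder
          have h1 : QFresh xs z1 (swaps l X) := by
            rcases inv z1 hf1 with h | h
            · exact absurd h hb1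
            · exact h
          rw [← hb2, swapVar_right]
          obtain ⟨u, hul, huP, huS, _⟩ := fresh_exists hinf hreg (swaps l X)
            (qSwap z1 z2 xs (swaps l X)) (swaps l X) hPg (hPg.qSwap z1 z2 xs) hPg xs [z1, z2]
          have hu1 : u ≠ z1 := fun h => hul (by simp [h])
          have hu2 : u ≠ z2 := fun h => hul (by simp [h])
          refine AlphaAbs.qAbs (y := u) (pair_not_mem hu1 hu2) huS huP ?_
          have key : Alpha (qSwap u z1 xs (swaps l X)) (swaps l X) := ih hgX l u z1 xs huP h1
          have keq := key.equiv z2 u xs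
          have e1 : qSwap u z1 xs (qSwap z1 z2 xs (swaps l X))
              = qSwap z2 u xs (qSwap u z1 xs (swaps l X)) := by
            rw [qSwap_comm' (swaps l X) z1 z2,
              qSwap_conj_same, swapVar_other (Ne.symm hu2) (Ne.symm hzz), swapVar_right]
          rw [e1, qSwap_comm' (swaps l X) u z2]
          exact keq
        · -- neither is the binder
          have h1 : QFresh xs z1 (swaps l X) := by
            rcases inv z1 hf1 with h | h
            · exact absurd h hb1
            · exact h
          have h2 : QFresh xs z2 (swaps l X) := by
            rcases inv z2 hf2 with h | h
            · exact absurd h hb2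
            · exact h
          rw [swapVar_other (Ne.symm hb1) (Ne.symm hb2)]
          obtain ⟨u, hul, huP, huS, _⟩ := fresh_exists hinf hreg (swaps l X)
            (qSwap z1 z2 xs (swaps l X)) (swaps l X) hPg (hPg.qSwap z1 z2 xs) hPg xs
            [swapsVar l xs x, z1, z2]
          have hub : u ≠ swapsVar l xs x := fun h => hul (by simp [h])
          have hu1 : u ≠ z1 := fun h => hul (by simp [h])
          have hu2 : u ≠ z2 := fun h => hul (by simp [h])
          refine AlphaAbs.qAbs (y := u) (pair_not_mem hub hub) huS huP ?_
          have e1 : qSwap u (swapsVar l xs x) xs (qSwap z1 z2 xs (swaps l X))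
              = qSwap z1 z2 xs (qSwap u (swapsVar l xs x) xs (swaps l X)) := by
            rw [qSwap_conj_same, swapVar_other (Ne.symm hu1) hb1,
              swapVar_other (Ne.symm hu2) hb2]
          rw [e1]
          have f1' : QFresh xs z1 (qSwap u (swapsVar l xs x) xs (swaps l X)) :=
            h1.equiv_fix u (swapsVar l xs x) xs (Ne.symm hu1) hb1
          have f2' : QFresh xs z2 (qSwap u (swapsVar l xs x) xs (swaps l X)) :=
            h2.equiv_fix u (swapsVar l xs x) xs (Ne.symm hu2) hb2
          exact ih hgX ((u, swapsVar l xs x, xs) :: l) z1 z2 xs f1' f2'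
    · -- the swapped sort differs from the binder's sort
      rw [swapVarS_sortne hs]
      have hzs : zs ≠ xs := fun h => hs h.symm
      have inv2 : ∀ z, QFreshAbs zs z (QAbs.qAbs xs (swapsVar l xs x) (swaps l X)) →
          QFresh zs z (swaps l X) := by
        intro z hz
        cases hz with
        | qAbs_bound => exact absurd rfl hs
        | qAbs_body h => exact h
      have h1 := inv2 z1 hf1
      have h2 := inv2 z2 hf2
      obtain ⟨u, hul, huP, huS, _⟩ := fresh_exists hinf hreg (swaps l X)
        (qSwap z1 z2 zs (swaps l X)) (swaps l X) hPg (hPg.qSwap z1 z2 zs) hPg xs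
        [swapsVar l xs x]
      have hub : u ≠ swapsVar l xs x := fun h => hul (by simp [h])
      refine AlphaAbs.qAbs (y := u) (pair_not_mem hub hub) huS huP ?_
      have e1 : qSwap u (swapsVar l xs x) xs (qSwap z1 z2 zs (swaps l X))
          = qSwap z1 z2 zs (qSwap u (swapsVar l xs x) xs (swaps l X)) := by
        rw [qSwap_conj (swaps l X) u (swapsVar l xs x) z1 z2 xs zs,
          swapVarS_sortne hzs, swapVarS_sortne hzs]
      rw [e1]
      have f1' : QFresh zs z1 (qSwap u (swapsVar l xs x) xs (swaps l X)) := by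
        have := h1.equiv u (swapsVar l xs x) xs
        rwa [swapVarS_sortne hzs] at this
      have f2' : QFresh zs z2 (qSwap u (swapsVar l xs x) xs (swaps l X)) := by
        have := h2.equiv u (swapsVar l xs x) xs
        rwa [swapVarS_sortne hzs] at this
      exact ih hgX ((u, swapsVar l xs x, xs) :: l) z1 z2 zs f1' f2'
theorem alpha_trans_pair (hinf : Cardinal.aleph0 ≤ Cardinal.mk var)
    (hreg : (Cardinal.mk var).IsRegular) :
    (∀ X : QTerm var varsort index bindex opsym, QGood X →
      ∀ l Y Z, Alpha (swaps l X) Y → Alpha Y Z → Alpha (swaps l X) Z) ∧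
    (∀ A : QAbs var varsort index bindex opsym, QGoodAbs A →
      ∀ l B C, AlphaAbs (swapsAbs l A) B → AlphaAbs B C → AlphaAbs (swapsAbs l A) C) := by
  have freshswap : ∀ (T : QTerm var varsort index bindex opsym), QGood T →
      ∀ z1 z2 zs, QFresh zs z1 T → QFresh zs z2 T → Alpha (qSwap z1 z2 zs T) T :=
    fun T hT z1 z2 zs f1 f2 => (freshswap_pair hinf hreg).1 T hT [] z1 z2 zs f1 f2
  apply QTerm.my_ind
  · intro xs x _ l Y Z h1 h2
    rw [swaps_qVar] at h1 ⊢
    cases h1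
    cases h2
    exact Alpha.qVar
  · intro d inp binp ih1 ih2 hg l Y Z h1 h2
    cases hg with
    | qOp hg1 hg2 _ _ =>
      rw [swaps_qOp] at h1 ⊢
      cases h1 with
      | @qOp _ _ _ inpY binpY hd1 hc1 hbd1 hbc1 =>
        cases h2 with
        | @qOp _ _ _ inpZ binpZ hd2 hc2 hbd2 hbc2 =>
          refine Alpha.qOp (fun i => (hd1 i).trans (hd2 i)) ?_
            (fun j => (hbd1 j).trans (hbd2 j)) ?_
          · intro i W Z' hW hZ'
            cases h : inp i with
            | none => simp [h] at hW
            | some X0 =>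
              simp only [h, Option.map_some] at hW
              obtain rfl := Option.some.inj hW
              have hmid : ∃ Y0, inpY i = some Y0 := by
                rcases hY : inpY i with _ | Y0
                · have := (hd1 i).mpr hY
                  simp [h] at this
                · exact ⟨Y0, rfl⟩
              obtain ⟨Y0, hY0⟩ := hmid
              exact ih1 i X0 h (hg1 i X0 h) l Y0 Z'
                (hc1 i _ Y0 (by simp [h]) hY0) (hc2 i Y0 Z' hY0 hZ')
          · intro j W Z' hW hZ'
            cases h : binp j with
            | none => simp [h] at hW
            | some A0 =>
              simp only [h, Option.map_some] at hW
              obtain rfl := Option.some.inj hW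
              have hmid : ∃ B0, binpY j = some B0 := by
                rcases hY : binpY j with _ | B0
                · have := (hbd1 j).mpr hY
                  simp [h] at this
                · exact ⟨B0, rfl⟩
              obtain ⟨B0, hY0⟩ := hmid
              exact ih2 j A0 h (hg2 j A0 h) l B0 Z'
                (hbc1 j _ B0 (by simp [h]) hY0) (hbc2 j B0 Z' hY0 hZ')
  · intro xs x X ih hgA l B C h1 h2
    have hgX : QGood X := by cases hgA with | qAbs h => exact h
    have hPg : QGood (swaps l X) := hgX.swaps l
    rw [swapsAbs_qAbs] at h1 ⊢
    cases h1 with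
    | @qAbs _ _ x' _ X' y hy hfy hfy' hay =>
      cases h2 with
      | @qAbs _ _ x'' _ X'' z hz hfz hfz' haz =>
        have hyb : y ≠ swapsVar l xs x := fun h => hy (Or.inl h)
        have hyx' : y ≠ x' := fun h => hy (Or.inr h)
        have hzx' : z ≠ x' := fun h => hz (Or.inl h)
        have hzx'' : z ≠ x'' := fun h => hz (Or.inr h)
        have hX'g : QGood X' :=
          QGood.qSwap' y x' xs (hay.good (hPg.qSwap y (swapsVar l xs x) xs))
        have hX''g : QGood X'' :=
          QGood.qSwap' z x'' xs (haz.good (hX'g.qSwap z x' xs))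
        obtain ⟨u, hul, huP, huX', huX''⟩ := fresh_exists hinf hreg (swaps l X) X' X''
          hPg hX'g hX''g xs [swapsVar l xs x, x', x'', y, z]
        have hub : u ≠ swapsVar l xs x := fun h => hul (by simp [h])
        have hux' : u ≠ x' := fun h => hul (by simp [h])
        have hux'' : u ≠ x'' := fun h => hul (by simp [h])
        have huy : u ≠ y := fun h => hul (by simp [h])
        have huz : u ≠ z := fun h => hul (by simp [h])
        refine AlphaAbs.qAbs (y := u) (pair_not_mem hub hux'') huP huX'' ?_
        have step1 : Alpha (qSwap u (swapsVar l xs x) xs (swaps l X))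
            (qSwap u (swapsVar l xs x) xs (qSwap u y xs (swaps l X))) :=
          ((freshswap (swaps l X) hPg u y xs huP hfy).symm').equiv u (swapsVar l xs x) xs
        have e1 : qSwap u y xs (qSwap y (swapsVar l xs x) xs (swaps l X))
            = qSwap u (swapsVar l xs x) xs (qSwap u y xs (swaps l X)) := by
          rw [qSwap_conj_same, swapVar_right, swapVar_other (Ne.symm hub) (Ne.symm hyb)]
        have step2 := hay.equiv u y xs
        rw [e1] at step2
        have t1 := ih hgX ((u, swapsVar l xs x, xs) :: l) _ _ step1 step2
        have e2 : qSwap u y xs (qSwap y x' xs X') = qSwap u x' xs (qSwap u y xs X') := by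
          rw [qSwap_conj_same, swapVar_right, swapVar_other (Ne.symm hux') (Ne.symm hyx')]
        rw [e2] at t1
        have step3 : Alpha (qSwap u x' xs (qSwap u y xs X')) (qSwap u x' xs X') :=
          (freshswap X' hX'g u y xs huX' hfy').equiv u x' xs
        have t2 := ih hgX ((u, swapsVar l xs x, xs) :: l) _ _ t1 step3
        have step4 : Alpha (qSwap u x' xs X') (qSwap u x' xs (qSwap u z xs X')) :=
          ((freshswap X' hX'g u z xs huX' hfz).symm').equiv u x' xs
        have t3 := ih hgX ((u, swapsVar l xs x, xs) :: l) _ _ t2 step4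
        have e3 : qSwap u z xs (qSwap z x' xs X') = qSwap u x' xs (qSwap u z xs X') := by
          rw [qSwap_conj_same, swapVar_right, swapVar_other (Ne.symm hux') (Ne.symm hzx')]
        have step5 := haz.equiv u z xs
        rw [e3] at step5
        have t4 := ih hgX ((u, swapsVar l xs x, xs) :: l) _ _ t3 step5
        have e4 : qSwap u z xs (qSwap z x'' xs X'') = qSwap u x'' xs (qSwap u z xs X'') := by
          rw [qSwap_conj_same, swapVar_right, swapVar_other (Ne.symm hux'') (Ne.symm hzx'')]
        rw [e4] at t4
        have step6 : Alpha (qSwap u x'' xs (qSwap u z xs X'')) (qSwap u x'' xs X'') :=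
          (freshswap X'' hX''g u z xs huX'' hfz').equiv u x'' xs
        exact ih hgX ((u, swapsVar l xs x, xs) :: l) _ _ t4 step6
theorem Alpha.trans' (hinf : Cardinal.aleph0 ≤ Cardinal.mk var)
    (hreg : (Cardinal.mk var).IsRegular)
    {X Y Z : QTerm var varsort index bindex opsym} (hg : QGood X)
    (h1 : Alpha X Y) (h2 : Alpha Y Z) : Alpha X Z :=
  (alpha_trans_pair hinf hreg).1 X hg [] Y Z h1 h2

theorem AlphaAbs.trans' (hinf : Cardinal.aleph0 ≤ Cardinal.mk var)
    (hreg : (Cardinal.mk var).IsRegular)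
    {A B C : QAbs var varsort index bindex opsym} (hg : QGoodAbs A)
    (h1 : AlphaAbs A B) (h2 : AlphaAbs B C) : AlphaAbs A C :=
  (alpha_trans_pair hinf hreg).2 A hg [] B C h1 h2

theorem Alpha.refl' (hinf : Cardinal.aleph0 ≤ Cardinal.mk var)
    (hreg : (Cardinal.mk var).IsRegular)
    {X : QTerm var varsort index bindex opsym} (hg : QGood X) : Alpha X X :=
  (alpha_refl_pair hinf hreg).1 X hg []

theorem eqvgen_alpha (hinf : Cardinal.aleph0 ≤ Cardinal.mk var)
    (hreg : (Cardinal.mk var).IsRegular)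
    {P Q : QTerm var varsort index bindex opsym}
    (h : Relation.EqvGen Alpha P Q) : (QGood P ↔ QGood Q) ∧ (QGood P → Alpha P Q) := by
  induction h with
  | rel a b hab => exact ⟨⟨fun hg => hab.good hg, fun hg => hab.symm'.good hg⟩, fun _ => hab⟩
  | refl a => exact ⟨Iff.rfl, fun hg => Alpha.refl' hinf hreg hg⟩
  | symm a b hab ih =>
    exact ⟨ih.1.symm, fun hg => (ih.2 (ih.1.2 hg)).symm'⟩
  | trans a b c hab hbc ih1 ih2 =>
    exact ⟨ih1.1.trans ih2.1, fun hg =>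
      Alpha.trans' hinf hreg hg (ih1.2 hg) (ih2.2 (ih1.1.1 hg))⟩

theorem eqvgen_alphaAbs (hinf : Cardinal.aleph0 ≤ Cardinal.mk var)
    (hreg : (Cardinal.mk var).IsRegular)
    {P Q : QAbs var varsort index bindex opsym}
    (h : Relation.EqvGen AlphaAbs P Q) :
    (QGoodAbs P ↔ QGoodAbs Q) ∧ (QGoodAbs P → AlphaAbs P Q) := by
  induction h with
  | rel a b hab => exact ⟨⟨fun hg => Alpha.good_pair.2 hab hg,
      fun hg => Alpha.good_pair.2 hab.symm' hg⟩, fun _ => hab⟩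
  | refl a => exact ⟨Iff.rfl, fun hg => (alpha_refl_pair hinf hreg).2 a hg []⟩
  | symm a b hab ih =>
    exact ⟨ih.1.symm, fun hg => (ih.2 (ih.1.2 hg)).symm'⟩
  | trans a b c hab hbc ih1 ih2 =>
    exact ⟨ih1.1.trans ih2.1, fun hg =>
      AlphaAbs.trans' hinf hreg hg (ih1.2 hg) (ih2.2 (ih1.1.1 hg))⟩

theorem tmk_eq_iff (hinf : Cardinal.aleph0 ≤ Cardinal.mk var)
    (hreg : (Cardinal.mk var).IsRegular)
    {P Q : QTerm var varsort index bindex opsym} (hP : QGood P) :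
    tmk P = tmk Q ↔ Alpha P Q := by
  constructor
  · intro h
    exact (eqvgen_alpha hinf hreg (Quot.eq.1 h)).2 hP
  · exact fun h => Quot.sound h

theorem amk_eq_iff (hinf : Cardinal.aleph0 ≤ Cardinal.mk var)
    (hreg : (Cardinal.mk var).IsRegular)
    {P Q : QAbs var varsort index bindex opsym} (hP : QGoodAbs P) :
    amk P = amk Q ↔ AlphaAbs P Q := by
  constructor
  · intro h
    exact (eqvgen_alphaAbs hinf hreg (Quot.eq.1 h)).2 hP
  · exact fun h => Quot.sound h
/-- for good terms `X`, `X'`, the equality of the abstractions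
`Abs xs x X` and `Abs xs' x' X'` is equivalent both to the exists-fresh swapping
condition and to the forall-fresh swapping condition. -/
theorem abs_eq_iff_swap (hinf : Cardinal.aleph0 ≤ Cardinal.mk var)
    (hreg : (Cardinal.mk var).IsRegular)
    (X X' : Term var varsort index bindex opsym) (hX : good X) (hX' : good X')
    (xs xs' : varsort) (x x' : var) :
    ((Abs xs x X = Abs xs' x' X') ↔
      (xs = xs' ∧ ∃ y, y ∉ ({x, x'} : Set var) ∧ fresh xs y X ∧ fresh xs y X' ∧
        tswap X y x xs = tswap X' y x' xs)) ∧
    ((Abs xs x X = Abs xs' x' X') ↔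
      (xs = xs' ∧ ∀ y, y ∉ ({x, x'} : Set var) → fresh xs y X → fresh xs y X' →
        tswap X y x xs = tswap X' y x' xs)) := by
  set T := trep X with hT
  set T' := trep X' with hT'
  have hgT : QGood T := hX
  have hgT' : QGood T' := hX'
  have freshswap : ∀ (U : QTerm var varsort index bindex opsym), QGood U →
      ∀ z1 z2 zs, QFresh zs z1 U → QFresh zs z2 U → Alpha (qSwap z1 z2 zs U) U :=
    fun U hU z1 z2 zs f1 f2 => (freshswap_pair hinf hreg).1 U hU [] z1 z2 zs f1 f2
  have h12 : (Abs xs x X = Abs xs' x' X') ↔ AlphaAbs (.qAbs xs x T) (.qAbs xs' x' T') :=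
    amk_eq_iff hinf hreg (QGoodAbs.qAbs hgT)
  have hswapiff : ∀ (y : var),
      (tswap X y x xs = tswap X' y x' xs) ↔ Alpha (qSwap y x xs T) (qSwap y x' xs T') :=
    fun y => tmk_eq_iff hinf hreg (hgT.qSwap y x xs)
  -- (1) ↔ (2)
  have iff2 : (Abs xs x X = Abs xs' x' X') ↔
      (xs = xs' ∧ ∃ y, y ∉ ({x, x'} : Set var) ∧ fresh xs y X ∧ fresh xs y X' ∧
        tswap X y x xs = tswap X' y x' xs) := by
    rw [h12]
    constructor
    · intro h
      cases h with
      | qAbs hy hf hf' ha =>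
        rename_i y
        exact ⟨rfl, y, hy, hf, hf', (hswapiff y).2 ha⟩
    · rintro ⟨rfl, y, hy, hf, hf', heq⟩
      exact AlphaAbs.qAbs hy hf hf' ((hswapiff y).1 heq)
  -- (2) → (3) : witness irrelevance
  have irr : (xs = xs' ∧ ∃ y, y ∉ ({x, x'} : Set var) ∧ fresh xs y X ∧ fresh xs y X' ∧
        tswap X y x xs = tswap X' y x' xs) →
      (xs = xs' ∧ ∀ y, y ∉ ({x, x'} : Set var) → fresh xs y X → fresh xs y X' →
        tswap X y x xs = tswap X' y x' xs) := by
    rintro ⟨rfl, y, hy, hfy, hfy', heq⟩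
    refine ⟨rfl, fun z hz hfz hfz' => ?_⟩
    by_cases hzy : z = y
    · subst hzy; exact heq
    have hay : Alpha (qSwap y x xs T) (qSwap y x' xs T') := (hswapiff y).1 heq
    have hyx : y ≠ x := fun h => hy (Or.inl h)
    have hyx' : y ≠ x' := fun h => hy (Or.inr h)
    have hzx : z ≠ x := fun h => hz (Or.inl h)
    have hzx' : z ≠ x' := fun h => hz (Or.inr h)
    have a1 := hay.equiv z y xs
    have e1 : qSwap z y xs (qSwap y x xs T) = qSwap z x xs (qSwap z y xs T) := by
      rw [qSwap_conj_same, swapVar_right, swapVar_other (Ne.symm hzx) (Ne.symm hyx)]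
    have e2 : qSwap z y xs (qSwap y x' xs T') = qSwap z x' xs (qSwap z y xs T') := by
      rw [qSwap_conj_same, swapVar_right, swapVar_other (Ne.symm hzx') (Ne.symm hyx')]
    rw [e1, e2] at a1
    have s1 : Alpha (qSwap z x xs T) (qSwap z x xs (qSwap z y xs T)) :=
      ((freshswap T hgT z y xs hfz hfy).symm').equiv z x xs
    have s2 : Alpha (qSwap z x' xs (qSwap z y xs T')) (qSwap z x' xs T') :=
      (freshswap T' hgT' z y xs hfz' hfy').equiv z x' xs
    have t1 := Alpha.trans' hinf hreg (hgT.qSwap z x xs) s1 a1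
    have t2 := Alpha.trans' hinf hreg (hgT.qSwap z x xs) t1 s2
    exact (hswapiff z).2 t2
  -- (3) → (2) : existence of a fresh witness
  have ex : (xs = xs' ∧ ∀ y, y ∉ ({x, x'} : Set var) → fresh xs y X → fresh xs y X' →
        tswap X y x xs = tswap X' y x' xs) →
      (xs = xs' ∧ ∃ y, y ∉ ({x, x'} : Set var) ∧ fresh xs y X ∧ fresh xs y X' ∧
        tswap X y x xs = tswap X' y x' xs) := by
    rintro ⟨rfl, h⟩
    obtain ⟨y, hyl, hf1, hf2, _⟩ := fresh_exists hinf hreg T T' T hgT hgT' hgT xs [x, x']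
    have hyx : y ≠ x := fun hh => hyl (by simp [hh])
    have hyx' : y ≠ x' := fun hh => hyl (by simp [hh])
    have hym := pair_not_mem hyx hyx'
    exact ⟨rfl, y, hym, hf1, hf2, h y hym hf1 hf2⟩
  exact ⟨iff2, iff2.trans ⟨fun h => irr h, fun h => ex h⟩⟩

end Binding
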